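/- For every modulus function γ, the γ-density topology is contained in the Lebesgue density topology: τ_γ ⊆ τ_d. Moreover, if γ satisfies Condition (A) (∀ε>0 ∃c∈(0,1) ∃δ>0 such that γ(ct)/γ(t)<ε for 0<t<δ), then τ_γ = τ_d. -/

import Mathlib

open MeasureTheory Set Filter Topology

/-- γ is a modulus function (on [0,∞); values and hypotheses only matter for nonnegative arguments). -/
def IsModulus (γ : ℝ → ℝ) : Prop :=
  (∀ a, 0 ≤ a → 0 ≤ γ a) ∧
  (∀ a, 0 ≤ a → (γ a = 0 ↔ a = 0)) ∧
  (∀ a b, 0 ≤ a → 0 ≤ b → γ (a + b) ≤ γ a + γ b) ∧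
  ContinuousWithinAt γ (Set.Ici 0) 0 ∧
  (∀ a b, 0 ≤ a → a ≤ b → γ a ≤ γ b)

/-- |(x-α, x+α) ∩ Aᶜ| -/
noncomputable def mInt (A : Set ℝ) (x α : ℝ) : ℝ :=
  (volume (Set.Ioo (x - α) (x + α) ∩ Aᶜ)).toReal

/-- x is a γ-density point of A. -/
def IsGammaDensityPt (γ : ℝ → ℝ) (A : Set ℝ) (x : ℝ) : Prop :=
  Tendsto (fun α => γ (mInt A x α) / γ (2 * α)) (𝓝[>] (0:ℝ)) (𝓝 0)

/-- x is a Lebesgue density point of A. -/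
def IsLebDensityPt (A : Set ℝ) (x : ℝ) : Prop :=
  Tendsto (fun α => mInt A x α / (2 * α)) (𝓝[>] (0:ℝ)) (𝓝 0)

/-- The γ-density family. -/
def Tgamma (γ : ℝ → ℝ) : Set (Set ℝ) :=
  {A : Set ℝ | MeasurableSet A ∧ A ⊆ {x : ℝ | IsGammaDensityPt γ A x}}

/-- The Lebesgue density family. -/
def Td : Set (Set ℝ) :=
  {A : Set ℝ | MeasurableSet A ∧ A ⊆ {x : ℝ | IsLebDensityPt A x}}

/-- Condition (A) for a modulus function. -/
def CondA (γ : ℝ → ℝ) : Prop :=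
  ∀ ε : ℝ, 0 < ε → ∃ c : ℝ, 0 < c ∧ c < 1 ∧ ∃ δ : ℝ, 0 < δ ∧
    ∀ t : ℝ, 0 < t → t < δ → γ (c * t) / γ t < ε

lemma modulus_zero {γ : ℝ → ℝ} (hγ : IsModulus γ) : γ 0 = 0 := (hγ.2.1 0 le_rfl).2 rfl

lemma modulus_pos {γ : ℝ → ℝ} (hγ : IsModulus γ) {a : ℝ} (ha : 0 < a) : 0 < γ a := by
  rcases lt_or_eq_of_le (hγ.1 a ha.le) with h | h
  · exact h
  · exact absurd ((hγ.2.1 a ha.le).1 h.symm) ha.ne'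

lemma modulus_nsmul {γ : ℝ → ℝ} (hγ : IsModulus γ) (n : ℕ) {t : ℝ} (ht : 0 ≤ t) :
    γ (n * t) ≤ n * γ t := by
  induction n with
  | zero => simp [modulus_zero hγ]
  | succ n ih =>
    have he : ((n : ℝ) + 1) * t = n * t + t := by ring
    push_cast
    rw [he]
    calc γ (n * t + t) ≤ γ (n * t) + γ t := hγ.2.2.1 _ _ (by positivity) ht
      _ ≤ n * γ t + γ t := by linarith
      _ = ((n : ℝ) + 1) * γ t := by ring

lemma mInt_nonneg (A : Set ℝ) (x α : ℝ) : 0 ≤ mInt A x α := ENNReal.toReal_nonneg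

lemma gamma_to_leb {γ : ℝ → ℝ} (hγ : IsModulus γ) {A : Set ℝ} {x : ℝ}
    (h : IsGammaDensityPt γ A x) : IsLebDensityPt A x := by
  rw [IsLebDensityPt, Metric.tendsto_nhds]
  intro ε hε
  set N : ℕ := ⌈1 / ε⌉₊ with hNdef
  have hN1 : 1 ≤ N := Nat.ceil_pos.mpr (by positivity)
  have hN0 : (0 : ℝ) < N := by exact_mod_cast hN1
  have hNε : 1 ≤ (N : ℝ) * ε := (div_le_iff₀ hε).mp (Nat.le_ceil _)
  have key := (Metric.tendsto_nhds.mp h) (1 / N) (by positivity)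
  filter_upwards [key, self_mem_nhdsWithin] with α hα1 hα2
  have hα0 : 0 < α := hα2
  rw [Real.dist_eq, sub_zero,
    abs_of_nonneg (div_nonneg (mInt_nonneg A x α) (by positivity))]
  by_contra hcon
  push_neg at hcon
  have hm : ε * (2 * α) ≤ mInt A x α := by
    have := (le_div_iff₀ (by positivity : (0:ℝ) < 2 * α)).mp hcon
    linarith
  have hε2α : 0 < ε * (2 * α) := by positivity
  have h1 : γ (ε * (2 * α)) ≤ γ (mInt A x α) := hγ.2.2.2.2 _ _ hε2α.le hm
  have h2 : γ (2 * α) ≤ N * γ (ε * (2 * α)) := by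
    have hle : 2 * α ≤ (N : ℝ) * (ε * (2 * α)) := by nlinarith
    calc γ (2 * α) ≤ γ ((N : ℝ) * (ε * (2 * α))) := hγ.2.2.2.2 _ _ (by positivity) hle
      _ ≤ N * γ (ε * (2 * α)) := modulus_nsmul hγ N hε2α.le
  have hpos : 0 < γ (ε * (2 * α)) := modulus_pos hγ hε2α
  have hg2 : 0 < γ (2 * α) := modulus_pos hγ (by positivity)
  have hratio : 1 / (N : ℝ) ≤ γ (mInt A x α) / γ (2 * α) := by
    calc (1 : ℝ) / N = γ (ε * (2 * α)) / ((N : ℝ) * γ (ε * (2 * α))) := by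
          rw [div_mul_eq_div_div_swap, div_self hpos.ne']
      _ ≤ γ (mInt A x α) / γ (2 * α) :=
          div_le_div₀ (hγ.1 _ (mInt_nonneg A x α)) h1 hg2 h2
  rw [Real.dist_eq, sub_zero] at hα1
  have := le_abs_self (γ (mInt A x α) / γ (2 * α))
  linarith

lemma leb_to_gamma {γ : ℝ → ℝ} (hγ : IsModulus γ) (hA : CondA γ) {A : Set ℝ} {x : ℝ}
    (h : IsLebDensityPt A x) : IsGammaDensityPt γ A x := by
  rw [IsGammaDensityPt, Metric.tendsto_nhds]
  intro ε hε
  obtain ⟨c, hc0, hc1, δ, hδ, hcd⟩ := hA ε hε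
  have key := (Metric.tendsto_nhds.mp h) c hc0
  have hδ2 : Ioo (0 : ℝ) (δ / 2) ∈ 𝓝[>] (0 : ℝ) :=
    Ioo_mem_nhdsGT_of_mem ⟨le_rfl, half_pos hδ⟩
  filter_upwards [key, hδ2] with α hα1 hα2
  obtain ⟨hα0, hαδ⟩ := hα2
  have hg2 : 0 < γ (2 * α) := modulus_pos hγ (by positivity)
  rw [Real.dist_eq, sub_zero,
    abs_of_nonneg (div_nonneg (hγ.1 _ (mInt_nonneg A x α)) hg2.le)]
  rw [Real.dist_eq, sub_zero,
    abs_of_nonneg (div_nonneg (mInt_nonneg A x α) (by positivity))] at hα1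
  have hm : mInt A x α ≤ c * (2 * α) := by
    have h2α : (0 : ℝ) < 2 * α := by positivity
    have := (div_lt_iff₀ h2α).mp hα1
    linarith
  have h1 : γ (mInt A x α) ≤ γ (c * (2 * α)) := hγ.2.2.2.2 _ _ (mInt_nonneg A x α) hm
  have h2 : γ (c * (2 * α)) / γ (2 * α) < ε := hcd (2 * α) (by positivity) (by linarith)
  calc γ (mInt A x α) / γ (2 * α) ≤ γ (c * (2 * α)) / γ (2 * α) :=
        div_le_div_of_nonneg_right h1 hg2.le
    _ < ε := h2

theorem stmt16 (γ : ℝ → ℝ) (hγ : IsModulus γ) :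
    Tgamma γ ⊆ Td ∧ (CondA γ → Tgamma γ = Td) := by
  constructor
  · intro A hA
    exact ⟨hA.1, fun x hx => gamma_to_leb hγ (hA.2 hx)⟩
  · intro hCA
    ext A
    constructor
    · intro hA
      exact ⟨hA.1, fun x hx => gamma_to_leb hγ (hA.2 hx)⟩
    · intro hA
      exact ⟨hA.1, fun x hx => leb_to_gamma hγ hCA (hA.2 hx)⟩
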